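/- arXiv:2510.17071 — 2 statements merged into one kernel-verified Lean document; each statement's English description precedes it below -/
import Mathlib

section
/- Let n ≥ 1 and let 𝒜ₙ be the complete-graph incidence matrix with self-loops. For any branch weights y : ℰ → ℂ and shunt weights y^sh : Fin n → ℂ, assembled into the stacked weight vector w on ℰ ⊕ Fin n, the matrix Y := 𝒜ₙᵀ · diag(w) · 𝒜ₙ is the standard bus admittance matrix: its diagonal entries are Y_{kk} = y^sh_k + Σ_{(i,j) ∈ ℰ, k ∈ {i,j}} y_{(i,j)}, and for k ≠ l its off-diagonal entries are Y_{kl} = −y_{(min(k,l), max(k,l))}. -/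
open Matrix

/-- The branches of the complete graph on `n` nodes: ordered pairs `(i, j)` with `i < j`. -/
abbrev Branch (n : ℕ) := {p : Fin n × Fin n // p.1 < p.2}

/-- The complete-graph incidence matrix with self-loops `𝒜ₙ`: the row of branch `(i, j)` has
entry `1` in column `i`, `-1` in column `j`, and `0` elsewhere; the row of node `k` has entry
`1` in column `k` and `0` elsewhere. -/
def completeIncidence (n : ℕ) : Matrix (Branch n ⊕ Fin n) (Fin n) ℂ :=
  Matrix.of fun r c =>
    match r with
    | Sum.inl e => if c = e.val.1 then 1 else if c = e.val.2 then -1 else 0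
    | Sum.inr k => if c = k then 1 else 0

lemma admittance_entry (n : ℕ) (y : Branch n → ℂ) (ysh : Fin n → ℂ) (k l : Fin n) :
    ((completeIncidence n)ᵀ * Matrix.diagonal (Sum.elim y ysh) * completeIncidence n) k l
    = (∑ e : Branch n, completeIncidence n (Sum.inl e) k * y e * completeIncidence n (Sum.inl e) l)
      + (if k = l then ysh k else 0) := by
  rw [Matrix.mul_assoc, Matrix.mul_apply, Fintype.sum_sum_type]
  congr 1
  · apply Finset.sum_congr rfl
    intro e _
    rw [Matrix.diagonal_mul]
    simp [Matrix.transpose_apply]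
    ring
  · simp [Matrix.diagonal_mul, Matrix.transpose_apply, completeIncidence, mul_comm]
    simp [eq_comm]

/-- For branch weights `y` and shunt weights `ysh`, the matrix
`Y = 𝒜ₙᵀ ⬝ diag (Sum.elim y ysh) ⬝ 𝒜ₙ` is the standard bus admittance matrix:
`Y k k = ysh k + ∑_{(i,j) ∈ ℰ, k ∈ {i,j}} y (i,j)`, and for `k ≠ l`,
`Y k l = - y (min k l, max k l)`. -/
theorem admittance_matrix_entries (n : ℕ) (hn : 1 ≤ n)
    (y : Branch n → ℂ) (ysh : Fin n → ℂ) (Y : Matrix (Fin n) (Fin n) ℂ)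
    (hY : Y = (completeIncidence n)ᵀ * Matrix.diagonal (Sum.elim y ysh) * completeIncidence n) :
    (∀ k : Fin n,
      Y k k = ysh k + ∑ e : Branch n, (if k = e.val.1 ∨ k = e.val.2 then y e else 0)) ∧
    (∀ k l : Fin n, ∀ h : k ≠ l,
      Y k l = - y ⟨(min k l, max k l), min_lt_max.mpr h⟩) := by
  constructor
  · intro k
    rw [hY, admittance_entry, if_pos rfl, add_comm]
    congr 1
    apply Finset.sum_congr rfl
    intro e _
    have hne : (e.val.1 : Fin n) ≠ e.val.2 := ne_of_lt e.2
    simp only [completeIncidence, Matrix.of_apply]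
    split_ifs with h1 h2 <;> simp_all <;> ring
  · intro k l h
    rw [hY, admittance_entry, if_neg h, add_zero]
    set e₀ : Branch n := ⟨(min k l, max k l), min_lt_max.mpr h⟩ with he₀
    rw [Finset.sum_eq_single e₀]
    · rcases lt_or_gt_of_ne h with hkl | hkl
      · simp [completeIncidence, he₀, hkl.le, hkl.not_ge, h, Ne.symm h]
      · simp [completeIncidence, he₀, hkl.le, hkl.not_ge, h, Ne.symm h]
    · intro e _ hne
      simp only [completeIncidence, Matrix.of_apply]
      have key : ¬(e.val = (k, l) ∨ e.val = (l, k)) := by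
        intro hc
        apply hne
        apply Subtype.ext
        rcases hc with hc | hc
        · have hkl := e.2; rw [hc] at hkl
          simp [he₀, hc, min_eq_left hkl.le, max_eq_right hkl.le]
        · have hkl := e.2; rw [hc] at hkl
          simp [he₀, hc, min_eq_right hkl.le, max_eq_left hkl.le]
      split_ifs with h1 h2 h3 h4 h5 h6
      · exact absurd (h1.trans h2.symm) h
      · exact absurd (Or.inl (Prod.ext_iff.mpr ⟨h1.symm, h3.symm⟩)) key
      · ring
      · exact absurd (Or.inr (Prod.ext_iff.mpr ⟨h5.symm, h4.symm⟩)) key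
      · exact absurd (h4.trans h6.symm) h
      · ring
      · ring
      all_goals ring
    · simp
end

section
/- (Differentiability of power flow solutions with respect to admittance parameters.) Suppose the admittance-parameterized power flow residual satisfies κ((v_𝒫⁰, δ⁰), (g⁰, b⁰)) = 0, and suppose the partial Fréchet derivative of κ with respect to the state variables (v_𝒫, δ) at ((v_𝒫⁰, δ⁰), (g⁰, b⁰)) — the power flow Jacobian J — is a continuous linear equivalence from (𝒫 → ℝ) × (Fin n → ℝ) onto (Fin n → ℝ) × (𝒫 → ℝ). Then there exist an open neighborhood U of (g⁰, b⁰) and a map σ : (Fin k → ℝ) × (Fin k → ℝ) → (𝒫 → ℝ) × (Fin n → ℝ), continuously differentiable on U, such that: (i) σ(g⁰, b⁰) = (v_𝒫⁰, δ⁰); (ii) κ(σ(g, b), (g, b)) = 0 for all (g, b) ∈ U; and (iii) the Fréchet derivative of σ at (g⁰, b⁰) equals −J⁻¹ composed with the partial Fréchet derivative of κ with respect to the parameters (g, b) at ((v_𝒫⁰, δ⁰), (g⁰, b⁰)). -/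
open Matrix

section aux
@[fun_prop] theorem contDiff_conj' : ContDiff ℝ ⊤ (fun z : ℂ => (starRingEnd ℂ) z) :=
  Complex.conjCLE.contDiff
@[fun_prop] theorem contDiff_ofReal' : ContDiff ℝ ⊤ (fun x : ℝ => (x : ℂ)) :=
  Complex.ofRealCLM.contDiff
@[fun_prop] theorem contDiff_cexp' : ContDiff ℝ ⊤ (fun z : ℂ => Complex.exp z) :=
  (Complex.contDiff_exp (𝕜 := ℂ)).restrict_scalars ℝ
@[fun_prop] theorem contDiff_re' : ContDiff ℝ ⊤ (fun z : ℂ => z.re) := Complex.reCLM.contDiff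
@[fun_prop] theorem contDiff_im' : ContDiff ℝ ⊤ (fun z : ℂ => z.im) := Complex.imCLM.contDiff
@[fun_prop] theorem contDiff_finset_sum' {E F ι : Type*} [NormedAddCommGroup E]
    [NormedSpace ℝ E] [NormedAddCommGroup F] [NormedSpace ℝ F] (s : Finset ι) (f : ι → E → F)
    (h : ∀ i, ContDiff ℝ ⊤ (f i)) : ContDiff ℝ ⊤ (fun x => ∑ i ∈ s, f i x) :=
  ContDiff.sum fun i _ => h i
end aux

noncomputable def busVoltage (n : ℕ) (P : Finset (Fin n)) (V : Fin n → ℝ)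
    (s : (↥P → ℝ) × (Fin n → ℝ)) : Fin n → ℂ :=
  fun i => (if h : i ∈ P then ((s.1 ⟨i, h⟩ : ℝ) : ℂ) else ((V i : ℝ) : ℂ)) *
    Complex.exp (Complex.I * (s.2 i : ℂ))

noncomputable def Fmat {n k : ℕ} (A : Matrix (Fin k) (Fin n) ℂ) (x : Fin n → ℂ) :
    Matrix (Fin n) (Fin k) ℂ :=
  Matrix.diagonal (fun i => (starRingEnd ℂ) (x i)) * Aᵀ * Matrix.diagonal (A *ᵥ x)

noncomputable def kappa (n k : ℕ) (P : Finset (Fin n)) (V : Fin n → ℝ)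
    (A : Matrix (Fin k) (Fin n) ℂ) (p0 : Fin n → ℝ) (q0 : ↥P → ℝ)
    (s : (↥P → ℝ) × (Fin n → ℝ)) (gb : (Fin k → ℝ) × (Fin k → ℝ)) :
    (Fin n → ℝ) × (↥P → ℝ) :=
  ( fun i => ((Fmat A (busVoltage n P V s) *ᵥ
        fun e => ((gb.1 e : ℝ) : ℂ) + Complex.I * ((gb.2 e : ℝ) : ℂ)) i).re - p0 i,
    fun i => ((Fmat A (busVoltage n P V s) *ᵥ
        fun e => ((gb.1 e : ℝ) : ℂ) + Complex.I * ((gb.2 e : ℝ) : ℂ)) (i : Fin n)).im + q0 i )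

@[fun_prop] theorem busVoltage_contDiff (n : ℕ) (P : Finset (Fin n)) (V : Fin n → ℝ) (i : Fin n) :
    ContDiff ℝ ⊤ (fun s : (↥P → ℝ) × (Fin n → ℝ) => busVoltage n P V s i) := by
  unfold busVoltage
  by_cases h : i ∈ P <;> simp only [h, dif_pos, dif_neg, not_false_iff] <;> fun_prop

set_option maxHeartbeats 1000000 in
theorem kappa_contDiff (n k : ℕ) (P : Finset (Fin n)) (V : Fin n → ℝ)
    (A : Matrix (Fin k) (Fin n) ℂ) (p0 : Fin n → ℝ) (q0 : ↥P → ℝ) :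
    ContDiff ℝ ⊤ (fun p : ((↥P → ℝ) × (Fin n → ℝ)) × ((Fin k → ℝ) × (Fin k → ℝ)) =>
      kappa n k P V A p0 q0 p.1 p.2) := by
  unfold kappa
  simp only [Fmat, mulVec, dotProduct, Matrix.mul_diagonal, Matrix.diagonal_mul,
    transpose_apply]
  fun_prop

/-- **Differentiability of power flow solutions with respect to admittance
parameters.** If `κ (s₀, w₀) = 0` and the partial Fréchet derivative of `κ` with respect to
the state at `(s₀, w₀)` is a continuous linear equivalence `J` (the power flow Jacobian is
invertible, i.e. no static voltage collapse), then there are an open neighborhood `U` of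
`w₀ = (g⁰, b⁰)` and a map `σ`, continuously differentiable on `U`, with `σ w₀ = s₀`,
`κ (σ w, w) = 0` on `U`, and `fderiv σ w₀ = -J⁻¹ ∘ ∂κ/∂(g,b) (s₀, w₀)`. -/
theorem powerflow_implicit_differentiation (n k : ℕ) (P : Finset (Fin n)) (V : Fin n → ℝ)
    (A : Matrix (Fin k) (Fin n) ℂ) (p0 : Fin n → ℝ) (q0 : ↥P → ℝ)
    (s0 : (↥P → ℝ) × (Fin n → ℝ)) (w0 : (Fin k → ℝ) × (Fin k → ℝ))
    (h0 : kappa n k P V A p0 q0 s0 w0 = 0)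
    (J : ((↥P → ℝ) × (Fin n → ℝ)) ≃L[ℝ] ((Fin n → ℝ) × (↥P → ℝ)))
    (hJ : fderiv ℝ (fun s => kappa n k P V A p0 q0 s w0) s0
      = (J : ((↥P → ℝ) × (Fin n → ℝ)) →L[ℝ] ((Fin n → ℝ) × (↥P → ℝ)))) :
    ∃ U : Set ((Fin k → ℝ) × (Fin k → ℝ)), IsOpen U ∧ w0 ∈ U ∧
      ∃ σ : (Fin k → ℝ) × (Fin k → ℝ) → (↥P → ℝ) × (Fin n → ℝ),
        ContDiffOn ℝ 1 σ U ∧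
        σ w0 = s0 ∧
        (∀ w ∈ U, kappa n k P V A p0 q0 (σ w) w = 0) ∧
        fderiv ℝ σ w0 =
          -((J.symm : ((Fin n → ℝ) × (↥P → ℝ)) →L[ℝ] ((↥P → ℝ) × (Fin n → ℝ))).comp
            (fderiv ℝ (fun w => kappa n k P V A p0 q0 s0 w) w0)) := by
  classical
  let S := (↥P → ℝ) × (Fin n → ℝ)
  let W := (Fin k → ℝ) × (Fin k → ℝ)
  let T := (Fin n → ℝ) × (↥P → ℝ)
  set κ : S × W → T := fun p => kappa n k P V A p0 q0 p.1 p.2 with hκdef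
  have hκ : ContDiff ℝ ⊤ κ := kappa_contDiff n k P V A p0 q0
  have hκd : DifferentiableAt ℝ κ (s0, w0) := (hκ.differentiable (by simp)).differentiableAt
  set D := fderiv ℝ κ (s0, w0) with hDdef
  have hD : HasFDerivAt κ D (s0, w0) := hκd.hasFDerivAt
  -- partial derivatives
  have hpartS : fderiv ℝ (fun s => kappa n k P V A p0 q0 s w0) s0
      = D.comp (ContinuousLinearMap.inl ℝ S W) :=
    by have := (hD.comp s0 (hasFDerivAt_prodMk_left (𝕜 := ℝ) s0 w0)).fderiv; exact this
  have hpartW : fderiv ℝ (fun w => kappa n k P V A p0 q0 s0 w) w0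
      = D.comp (ContinuousLinearMap.inr ℝ S W) :=
    by have := (hD.comp w0 (hasFDerivAt_prodMk_right (𝕜 := ℝ) s0 w0)).fderiv; exact this
  set K : W →L[ℝ] T := D.comp (ContinuousLinearMap.inr ℝ S W) with hKdef
  have hJ' : ∀ ds : S, D (ds, 0) = J ds := by
    intro ds
    have h := hJ.symm.trans hpartS
    have h2 := congrFun (congrArg (fun L : S →L[ℝ] T => (L : S → T)) h) ds
    simpa using h2.symm
  have hDsplit : ∀ p : S × W, D p = J p.1 + K p.2 := by
    intro p
    have h : D p = D (p.1, (0 : W)) + D ((0 : S), p.2) := by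
      rw [← D.map_add]
      congr 1 <;> simp
    rw [h, hJ' p.1]
    rfl
  -- the equivalence E : S × W ≃L[ℝ] T × W
  set f₁ : S × W →L[ℝ] T × W :=
    (((J : S →L[ℝ] T).comp (ContinuousLinearMap.fst ℝ S W)
      + K.comp (ContinuousLinearMap.snd ℝ S W))).prod (ContinuousLinearMap.snd ℝ S W) with hf₁
  set f₂ : T × W →L[ℝ] S × W :=
    (((J.symm : T →L[ℝ] S)).comp ((ContinuousLinearMap.fst ℝ T W)
      - K.comp (ContinuousLinearMap.snd ℝ T W))).prod (ContinuousLinearMap.snd ℝ T W) with hf₂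
  set E : (S × W) ≃L[ℝ] (T × W) := ContinuousLinearEquiv.equivOfInverse f₁ f₂
    (fun p => by
      simp [hf₁, hf₂, ContinuousLinearMap.prod_apply])
    (fun q => by
      simp [hf₁, hf₂, ContinuousLinearMap.prod_apply]) with hE
  -- G and its derivative
  set G : S × W → T × W := fun p => (κ p, p.2) with hG
  have hGsmooth : ContDiff ℝ ⊤ G := hκ.prodMk contDiff_snd
  have hGat : ContDiffAt ℝ ⊤ G (s0, w0) := hGsmooth.contDiffAt
  have hGd : HasFDerivAt G (E : S × W →L[ℝ] T × W) (s0, w0) := by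
    have h1 : HasFDerivAt G (D.prod (ContinuousLinearMap.snd ℝ S W)) (s0, w0) :=
      hD.prodMk (ContinuousLinearMap.snd ℝ S W).hasFDerivAt
    have h2 : (E : S × W →L[ℝ] T × W) = D.prod (ContinuousLinearMap.snd ℝ S W) := by
      apply ContinuousLinearMap.ext
      intro p
      show E p = (D p, p.2)
      rw [hDsplit p]
      show f₁ p = _
      simp [hf₁]
    rw [h2]; exact h1
  have hn1 : (⊤ : WithTop ℕ∞) ≠ 0 := by simp
  set g : T × W → S × W := hGat.localInverse hGd hn1 with hg
  have hGs0 : G (s0, w0) = ((0 : T), w0) := by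
    simp [hG, hκdef, h0]
  have hgleft : g (G (s0, w0)) = (s0, w0) := hGat.localInverse_apply_image hGd hn1
  have hgsmooth : ContDiffAt ℝ ⊤ g (G (s0, w0)) := hGat.to_localInverse hGd hn1
  have hgright : ∀ᶠ y in nhds (G (s0, w0)), G (g y) = y :=
    (hGat.hasStrictFDerivAt' hGd hn1).eventually_right_inverse
  -- the implicit function
  set σ : W → S := fun w => (g ((0 : T), w)).1 with hσ
  have hσat : ContDiffAt ℝ 1 σ w0 := by
    have h1 : ContDiffAt ℝ 1 g ((0 : T), w0) := by
      rw [← hGs0]; exact hgsmooth.of_le le_top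
    have h2 : ContDiffAt ℝ 1 (fun w : W => ((0 : T), w)) w0 :=
      (contDiff_const.prodMk contDiff_id).contDiffAt
    exact (contDiff_fst.contDiffAt).comp w0 (h1.comp w0 h2)
  obtain ⟨u1, hu1, hu1'⟩ := hσat.contDiffOn le_rfl (by simp)
  have hrw : ∀ᶠ w in nhds w0, G (g ((0 : T), w)) = ((0 : T), w) := by
    have hc : Filter.Tendsto (fun w : W => ((0 : T), w)) (nhds w0) (nhds ((0 : T), w0)) :=
      (continuous_const.prodMk continuous_id).continuousAt
    rw [hGs0] at hgright
    exact hc.eventually hgright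
  obtain ⟨u2, hu2, hu2'⟩ := Filter.eventually_iff_exists_mem.mp hrw
  refine ⟨interior (u1 ∩ u2), isOpen_interior,
    mem_interior_iff_mem_nhds.mpr (Filter.inter_mem hu1 hu2), σ, ?_, ?_, ?_, ?_⟩
  · exact (hu1'.mono (interior_subset.trans Set.inter_subset_left))
  · have : ((0 : T), w0) = G (s0, w0) := hGs0.symm
    rw [hσ]; simp only [this, hgleft]
  · intro w hw
    have h2 := hu2' w (interior_subset hw).2
    have hfst : κ (g ((0 : T), w)) = 0 := congrArg Prod.fst h2
    have hsnd : (g ((0 : T), w)).2 = w := congrArg Prod.snd h2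
    have : kappa n k P V A p0 q0 (σ w) w = κ ((g ((0 : T), w)).1, (g ((0 : T), w)).2) := by
      rw [hsnd]
    rw [this, Prod.mk.eta, hfst]
  · -- derivative formula
    have hσd : DifferentiableAt ℝ σ w0 := hσat.differentiableAt (by simp)
    set L := fderiv ℝ σ w0 with hL
    have hhσ : HasFDerivAt σ L w0 := hσd.hasFDerivAt
    have hσw0 : σ w0 = s0 := by
      have : ((0 : T), w0) = G (s0, w0) := hGs0.symm
      rw [hσ]; simp only [this, hgleft]
    -- chain rule on φ w = κ (σ w, w)
    have hφ : HasFDerivAt (fun w => κ (σ w, w)) (D.comp (L.prod (ContinuousLinearMap.id ℝ W)))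
        w0 := by
      have hpt : (σ w0, w0) = (s0, w0) := by rw [hσw0]
      exact HasFDerivAt.comp w0 (hpt ▸ hD) (hhσ.prodMk (hasFDerivAt_id w0))
    have hφ0 : HasFDerivAt (fun w => κ (σ w, w)) (0 : W →L[ℝ] T) w0 := by
      have hev : (fun w => κ (σ w, w)) =ᶠ[nhds w0] fun _ => (0 : T) := by
        filter_upwards [Filter.mem_of_superset hu2 (fun w hw => hw)] with w hw
        have h2 := hu2' w hw
        have hfst : κ (g ((0 : T), w)) = 0 := congrArg Prod.fst h2
        have hsnd : (g ((0 : T), w)).2 = w := congrArg Prod.snd h2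
        show κ (σ w, w) = 0
        have : (σ w, w) = g ((0 : T), w) := by
          rw [hσ]; exact Prod.ext rfl hsnd.symm
        rw [this, hfst]
      exact (hasFDerivAt_const (0 : T) w0).congr_of_eventuallyEq hev
    have huniq : D.comp (L.prod (ContinuousLinearMap.id ℝ W)) = 0 := hφ.unique hφ0
    rw [hpartW]
    apply ContinuousLinearMap.ext
    intro dw
    have h1 : D (L dw, dw) = 0 := by
      have := congrFun (congrArg (fun M : W →L[ℝ] T => (M : W → T)) huniq) dw
      simpa using this
    have h2 : J (L dw) + K dw = 0 := by rw [← hDsplit (L dw, dw)]; exact h1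
    have h3 : J (L dw) = -(K dw) := by linear_combination h2
    have : L dw = J.symm (-(K dw)) := by
      rw [← h3]; simp
    simpa using this
end
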